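/- If the same proportional weights achieve flow value val on graph G-hat and both G-hat and G differ only in the capacities of the impression layer (with L1 difference gamma between the capacity vectors), then the flow value achieved on G is at least val - gamma. -/
import Mathlib


open Finset

/-- Proportional allocation in a layered DAG where impression type `i` has capacity
(multiplicity) `m i`: `LayerAllocM NI N lay C m w j v` is the flow arriving at vertex `v`
of layer `j+1`. -/
noncomputable def LayerAllocM {I V : Type*} [Fintype I] [Fintype V] [DecidableEq V]
    (NI : I → Finset V) (N : V → Finset V) (lay : V → ℕ) (C : V → ℝ)
    (m : I → ℝ) (w : V → ℝ) : ℕ → V → ℝ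
  | 0 => fun v => ∑ i : I, if v ∈ NI i then m i * (w v / ∑ v' ∈ NI i, w v') else 0
  | (j + 1) => fun v => ∑ u : V,
      if v ∈ N u ∧ lay u = j + 1 then
        min (LayerAllocM NI N lay C m w j u) (C u) * (w v / ∑ v' ∈ N u, w v')
      else 0

/-- Flow value: total feasible load of the last layer `d`. -/
noncomputable def LayerValM {I V : Type*} [Fintype I] [Fintype V] [DecidableEq V]
    (NI : I → Finset V) (N : V → Finset V) (lay : V → ℕ) (C : V → ℝ)
    (d : ℕ) (m : I → ℝ) (w : V → ℝ) : ℝ :=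
  ∑ v : V, if lay v = d then min (LayerAllocM NI N lay C m w (d - 1) v) (C v) else 0


lemma min_lip (a a' c : ℝ) : |min a c - min a' c| ≤ |a - a'| := by
  have := abs_min_sub_min_le_max a c a' c
  simpa using this

lemma alloc_l1 {I V : Type*} [Fintype I] [Fintype V] [DecidableEq V]
    (NI : I → Finset V) (N : V → Finset V) (lay : V → ℕ) (C : V → ℝ)
    (w : V → ℝ) (hw : ∀ v, 0 < w v)
    (m mhat : I → ℝ) (j : ℕ) :
    ∑ v : V, |LayerAllocM NI N lay C m w j v - LayerAllocM NI N lay C mhat w j v|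
      ≤ ∑ i, |m i - mhat i| := by
  have frac_nonneg : ∀ (s : Finset V) v, v ∈ s → 0 ≤ w v / ∑ v' ∈ s, w v' := by
    intro s v hv
    exact div_nonneg (hw v).le (Finset.sum_nonneg fun u _ => (hw u).le)
  have frac_sum_le : ∀ (s : Finset V), ∑ v ∈ s, w v / ∑ v' ∈ s, w v' ≤ 1 := by
    intro s
    rw [← Finset.sum_div]
    rcases eq_or_ne (∑ v' ∈ s, w v') 0 with h | h
    · simp [h]
    · rw [div_self h]
  induction j with
  | zero =>
    calc ∑ v : V, |LayerAllocM NI N lay C m w 0 v - LayerAllocM NI N lay C mhat w 0 v|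
        ≤ ∑ v : V, ∑ i : I,
            (if v ∈ NI i then |m i - mhat i| * (w v / ∑ v' ∈ NI i, w v') else 0) := by
          refine Finset.sum_le_sum fun v _ => ?_
          rw [LayerAllocM, LayerAllocM, ← Finset.sum_sub_distrib]
          refine (Finset.abs_sum_le_sum_abs _ _).trans (Finset.sum_le_sum fun i _ => ?_)
          split
          · next h =>
            rw [← sub_mul, abs_mul, abs_of_nonneg (frac_nonneg _ _ h)]
          · simp
      _ = ∑ i : I, |m i - mhat i| * ∑ v ∈ NI i, (w v / ∑ v' ∈ NI i, w v') := by
          rw [Finset.sum_comm]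
          refine Finset.sum_congr rfl fun i _ => ?_
          rw [Finset.mul_sum, Finset.sum_ite_mem, Finset.univ_inter]
      _ ≤ ∑ i : I, |m i - mhat i| * 1 :=
          Finset.sum_le_sum fun i _ =>
            mul_le_mul_of_nonneg_left (frac_sum_le _) (abs_nonneg _)
      _ = ∑ i, |m i - mhat i| := by simp
  | succ j ih =>
    calc ∑ v : V, |LayerAllocM NI N lay C m w (j+1) v - LayerAllocM NI N lay C mhat w (j+1) v|
        ≤ ∑ v : V, ∑ u : V,
            (if v ∈ N u then
              |LayerAllocM NI N lay C m w j u - LayerAllocM NI N lay C mhat w j u|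
                * (w v / ∑ v' ∈ N u, w v') else 0) := by
          refine Finset.sum_le_sum fun v _ => ?_
          rw [LayerAllocM, LayerAllocM, ← Finset.sum_sub_distrib]
          refine (Finset.abs_sum_le_sum_abs _ _).trans (Finset.sum_le_sum fun u _ => ?_)
          split
          · next h =>
            rw [← sub_mul, abs_mul, abs_of_nonneg (frac_nonneg _ _ h.1)]
            rw [if_pos h.1]
            exact mul_le_mul_of_nonneg_right (min_lip _ _ _) (frac_nonneg _ _ h.1)
          · next h =>
            split
            · next h2 =>
              simpa using mul_nonneg (abs_nonneg _) (frac_nonneg _ _ h2)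
            · simp
      _ = ∑ u : V,
            |LayerAllocM NI N lay C m w j u - LayerAllocM NI N lay C mhat w j u|
              * ∑ v ∈ N u, (w v / ∑ v' ∈ N u, w v') := by
          rw [Finset.sum_comm]
          refine Finset.sum_congr rfl fun u _ => ?_
          rw [Finset.mul_sum, Finset.sum_ite_mem, Finset.univ_inter]
      _ ≤ ∑ u : V,
            |LayerAllocM NI N lay C m w j u - LayerAllocM NI N lay C mhat w j u| * 1 :=
          Finset.sum_le_sum fun u _ =>
            mul_le_mul_of_nonneg_left (frac_sum_le _) (abs_nonneg _)
      _ = ∑ u : V, |LayerAllocM NI N lay C m w j u - LayerAllocM NI N lay C mhat w j u| := by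
          simp
      _ ≤ ∑ i, |m i - mhat i| := ih

/-- If the same proportional weights achieve value `val` on the instance with impression
capacities `mhat`, then on the instance with impression capacities `m` (all other
capacities equal) they achieve value at least `val - γ`, where
`γ = ∑ i |m i - mhat i|`. -/
theorem proportional_value_instance_lipschitz
    {I V : Type*} [Fintype I] [Fintype V] [DecidableEq V]
    (NI : I → Finset V) (N : V → Finset V) (lay : V → ℕ) (C : V → ℝ)
    (d : ℕ) (hd : 1 ≤ d)
    (hC : ∀ v, 0 ≤ C v)
    (w : V → ℝ) (hw : ∀ v, 0 < w v)
    (m mhat : I → ℝ) (hm : ∀ i, 0 ≤ m i) (hmhat : ∀ i, 0 ≤ mhat i) :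
    LayerValM NI N lay C d mhat w - ∑ i, |m i - mhat i| ≤ LayerValM NI N lay C d m w := by
  have key : LayerValM NI N lay C d mhat w - LayerValM NI N lay C d m w
      ≤ ∑ i, |m i - mhat i| := by
    rw [LayerValM, LayerValM, ← Finset.sum_sub_distrib]
    calc ∑ v : V, ((if lay v = d then min (LayerAllocM NI N lay C mhat w (d-1) v) (C v) else 0)
            - (if lay v = d then min (LayerAllocM NI N lay C m w (d-1) v) (C v) else 0))
        ≤ ∑ v : V, |LayerAllocM NI N lay C mhat w (d-1) v
            - LayerAllocM NI N lay C m w (d-1) v| := by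
          refine Finset.sum_le_sum fun v _ => ?_
          split
          · exact (le_abs_self _).trans (min_lip _ _ _)
          · simpa using abs_nonneg _
      _ ≤ ∑ i, |mhat i - m i| := alloc_l1 NI N lay C w hw mhat m (d-1)
      _ = ∑ i, |m i - mhat i| := by simp [abs_sub_comm]
  linarith
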